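/- With high probability as m → ∞, the random bipartite graph G(m,m,1/2) on M₁ ∪ M₂ has the property that for every A ⊆ M₁ and B ⊆ M₂ with |A| = |B| = αm (0 < α < 1 fixed), there is a matching between A and B of size at least αm − log m. -/

import Mathlib

open Finset Filter

lemma countST {n : ℕ} (S T : Finset (Fin n)) :
    (univ.filter fun g : Fin n → Fin n → Bool =>
      ∀ a ∈ S, ∀ b ∈ T, g a b = false).card = 2 ^ (n ^ 2 - S.card * T.card) := by
  classical
  rw [← Fintype.card_subtype]
  let e : {g : Fin n → Fin n → Bool // ∀ a ∈ S, ∀ b ∈ T, g a b = false} ≃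
      ({p : Fin n × Fin n // p ∉ S ×ˢ T} → Bool) :=
    { toFun := fun g q => g.1 q.1.1 q.1.2
      invFun := fun h => ⟨fun a b => if hp : (a, b) ∈ S ×ˢ T then false else h ⟨(a, b), hp⟩,
        by intro a ha b hb; simp [Finset.mem_product, ha, hb]⟩
      left_inv := by
        intro g
        ext a b
        by_cases hp : (a, b) ∈ S ×ˢ T
        · simp only [hp, dif_pos]
          rw [Finset.mem_product] at hp
          exact (g.2 a hp.1 b hp.2).symm
        · simp [hp]
      right_inv := by
        intro h
        funext q
        simp only []
        rw [dif_neg q.2] }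
  rw [Fintype.card_congr e, Fintype.card_fun, Fintype.card_bool]
  congr 1
  have : Fintype.card {p : Fin n × Fin n // p ∉ S ×ˢ T} =
      Fintype.card (Fin n × Fin n) - Fintype.card {p : Fin n × Fin n // p ∈ S ×ˢ T} :=
    Fintype.card_subtype_compl _
  rw [this, Fintype.card_coe, Finset.card_product, Fintype.card_prod, Fintype.card_fin]
  ring_nf


lemma defect_hall {n d : ℕ} (g : Fin n → Fin n → Bool) (A B : Finset (Fin n))
    (H : ∀ S ⊆ A, S.card ≤ (B.filter fun b => ∃ a ∈ S, g a b = true).card + d) :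
    ∃ (A' : Finset (Fin n)) (f : Fin n → Fin n), A' ⊆ A ∧ A.card ≤ A'.card + d ∧
      Set.InjOn f ↑A' ∧ ∀ a ∈ A', f a ∈ B ∧ g a (f a) = true := by
  classical
  set t : ↥A → Finset (Fin n ⊕ Fin d) := fun a =>
    ((B.filter fun b => g a.1 b = true).map ⟨Sum.inl, Sum.inl_injective⟩) ∪
      (univ.map ⟨Sum.inr, Sum.inr_injective⟩) with ht
  have hall : ∀ s : Finset ↥A, s.card ≤ (s.biUnion t).card := by
    intro s
    rcases s.eq_empty_or_nonempty with rfl | ⟨a0, ha0⟩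
    · simp
    set S : Finset (Fin n) := s.image Subtype.val with hS
    have hSA : S ⊆ A := by
      intro x hx
      simp only [hS, mem_image] at hx
      obtain ⟨a, _, rfl⟩ := hx
      exact a.2
    set N : Finset (Fin n) := B.filter fun b => ∃ a ∈ S, g a b = true with hN
    have hsub : (N.map ⟨Sum.inl, Sum.inl_injective⟩) ∪ (univ.map ⟨Sum.inr, Sum.inr_injective⟩)
        ⊆ s.biUnion t := by
      intro x hx
      rw [mem_union] at hx
      rcases hx with hx | hx
      · rw [Finset.mem_map] at hx
        obtain ⟨b, hb, rfl⟩ := hx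
        rw [hN, mem_filter] at hb
        obtain ⟨a, haS, hgab⟩ := hb.2
        rw [hS, mem_image] at haS
        obtain ⟨a', ha's, rfl⟩ := haS
        refine mem_biUnion.2 ⟨a', ha's, ?_⟩
        rw [ht, mem_union]
        left
        rw [Finset.mem_map]
        exact ⟨b, mem_filter.2 ⟨hb.1, hgab⟩, rfl⟩
      · refine mem_biUnion.2 ⟨a0, ha0, ?_⟩
        rw [ht, mem_union]
        right
        exact hx
    have hdisj : Disjoint (N.map (⟨Sum.inl, Sum.inl_injective⟩ : Fin n ↪ Fin n ⊕ Fin d))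
        (univ.map ⟨Sum.inr, Sum.inr_injective⟩) := by
      rw [Finset.disjoint_left]
      rintro x hx hx'
      rw [Finset.mem_map] at hx hx'
      obtain ⟨b, _, rfl⟩ := hx
      obtain ⟨j, _, hj⟩ := hx'
      exact Sum.inl_ne_inr hj.symm
    have hcard : s.card = S.card := (Finset.card_image_of_injective s Subtype.val_injective).symm
    calc s.card = S.card := hcard
      _ ≤ N.card + d := H S hSA
      _ = ((N.map ⟨Sum.inl, Sum.inl_injective⟩) ∪
            (univ.map ⟨Sum.inr, Sum.inr_injective⟩)).card := by
          rw [Finset.card_union_of_disjoint hdisj, Finset.card_map, Finset.card_map, card_univ,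
            Fintype.card_fin]
      _ ≤ (s.biUnion t).card := Finset.card_le_card hsub
  obtain ⟨f0, hf0inj, hf0mem⟩ := (Finset.all_card_le_biUnion_card_iff_exists_injective t).1 hall
  set L : Finset ↥A := A.attach.filter fun a => (f0 a).isLeft with hL
  set A' : Finset (Fin n) := L.image Subtype.val with hA'
  set f : Fin n → Fin n := fun x =>
    if hx : x ∈ A then Sum.elim id (fun _ => x) (f0 ⟨x, hx⟩) else x with hf
  have hmemA' : ∀ x, x ∈ A' → ∃ hx : x ∈ A, (f0 ⟨x, hx⟩).isLeft = true := by
    intro x hx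
    rw [hA', mem_image] at hx
    obtain ⟨a, ha, rfl⟩ := hx
    rw [hL, mem_filter] at ha
    exact ⟨a.2, ha.2⟩
  have hfval : ∀ (x) (hx : x ∈ A) (b : Fin n), f0 ⟨x, hx⟩ = Sum.inl b → f x = b := by
    intro x hx b hb
    rw [hf]
    simp only [hx, dif_pos, hb, Sum.elim_inl, id]
  refine ⟨A', f, ?_, ?_, ?_, ?_⟩
  · intro x hx
    obtain ⟨hx, _⟩ := hmemA' x hx
    exact hx
  · have hcardA' : A'.card = L.card :=
      Finset.card_image_of_injective L Subtype.val_injective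
    set R : Finset ↥A := A.attach.filter fun a => ¬ (f0 a).isLeft with hR
    have hLR : L.card + R.card = A.card := by
      rw [hL, hR, Finset.card_filter_add_card_filter_not, Finset.card_attach]
    have hRd : R.card ≤ d := by
      have : R.card ≤ ((univ : Finset (Fin d)).image some).card := by
        apply Finset.card_le_card_of_injOn (fun a => (f0 a).getRight?)
        · intro a ha
          rw [hR, mem_coe, mem_filter] at ha
          rcases Sum.isRight_iff.1 (Sum.not_isLeft.1 ha.2) with ⟨y, hy⟩
          dsimp only
          rw [hy]
          exact mem_image.2 ⟨y, mem_univ y, rfl⟩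
        · intro a ha b hb hab
          rw [hR, mem_coe, mem_filter] at ha hb
          rcases Sum.isRight_iff.1 (Sum.not_isLeft.1 ha.2) with ⟨y, hy⟩
          rcases Sum.isRight_iff.1 (Sum.not_isLeft.1 hb.2) with ⟨z, hz⟩
          apply hf0inj
          simp only [hy, hz, Sum.getRight?] at hab
          rw [hy, hz, Option.some_inj.1 hab]
      calc R.card ≤ _ := this
        _ ≤ (univ : Finset (Fin d)).card := Finset.card_image_le
        _ = d := by rw [card_univ, Fintype.card_fin]
    omega
  · intro x hx y hy hxy
    rw [mem_coe] at hx hy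
    obtain ⟨hxA, hxL⟩ := hmemA' x hx
    obtain ⟨hyA, hyL⟩ := hmemA' y hy
    rcases Sum.isLeft_iff.1 hxL with ⟨bx, hbx⟩
    rcases Sum.isLeft_iff.1 hyL with ⟨by', hby⟩
    rw [hfval x hxA bx hbx, hfval y hyA by' hby] at hxy
    have : f0 ⟨x, hxA⟩ = f0 ⟨y, hyA⟩ := by rw [hbx, hby, hxy]
    have := hf0inj this
    exact congrArg Subtype.val this
  · intro a ha
    obtain ⟨haA, haL⟩ := hmemA' a ha
    rcases Sum.isLeft_iff.1 haL with ⟨b, hb⟩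
    rw [hfval a haA b hb]
    have := hf0mem ⟨a, haA⟩
    rw [ht] at this
    rw [hb, mem_union] at this
    rcases this with h | h
    · rw [Finset.mem_map] at h
      obtain ⟨b', hb', hb'eq⟩ := h
      have : b' = b := Sum.inl_injective hb'eq
      subst this
      rw [mem_filter] at hb'
      exact ⟨hb'.1, hb'.2⟩
    · rw [Finset.mem_map] at h
      obtain ⟨j, _, hj⟩ := h
      simp at hj


lemma det {n K d : ℕ} (g : Fin n → Fin n → Bool)
    (Hg : ∀ S T : Finset (Fin n), d + 1 ≤ S.card → S.card ≤ K →
        T.card = K + d + 1 - S.card → ∃ a ∈ S, ∃ b ∈ T, g a b = true)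
    (A B : Finset (Fin n)) (hA : A.card = K) (hB : B.card = K) :
    ∃ (A' : Finset (Fin n)) (f : Fin n → Fin n), A' ⊆ A ∧ K ≤ A'.card + d ∧
      Set.InjOn f ↑A' ∧ ∀ a ∈ A', f a ∈ B ∧ g a (f a) = true := by
  classical
  rw [← hA]
  apply defect_hall
  intro S hS
  by_contra hcon
  push_neg at hcon
  set N : Finset (Fin n) := B.filter fun b => ∃ a ∈ S, g a b = true with hN
  have hNB : N ⊆ B := filter_subset _ _
  have hScard : S.card ≤ K := hA ▸ Finset.card_le_card hS
  have hd1 : d + 1 ≤ S.card := by omega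
  have hT0 : (B \ N).card = K - N.card := by rw [card_sdiff_of_subset hNB, hB]
  have hle : K + d + 1 - S.card ≤ (B \ N).card := by omega
  obtain ⟨T, hTsub, hTcard⟩ := Finset.exists_subset_card_eq hle
  obtain ⟨a, haS, b, hbT, hgab⟩ := Hg S T hd1 hScard hTcard
  have hbBN := hTsub hbT
  rw [Finset.mem_sdiff] at hbBN
  exact hbBN.2 (mem_filter.2 ⟨hbBN.1, a, haS, hgab⟩)


theorem stmt7 (α : ℝ) (h1 : 0 < α) (h2 : α < 1) :
    Filter.Tendsto (fun m : ℕ =>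
      ((Finset.univ.filter (fun g : Fin m → Fin m → Bool =>
          ∀ A B : Finset (Fin m), A.card = ⌊α * m⌋₊ → B.card = ⌊α * m⌋₊ →
            ∃ (A' : Finset (Fin m)) (f : Fin m → Fin m),
              A' ⊆ A ∧ α * m - Real.log m ≤ (A'.card : ℝ) ∧
              Set.InjOn f ↑A' ∧ ∀ a ∈ A', f a ∈ B ∧ g a (f a) = true)).card : ℝ)
        / 2 ^ (m ^ 2))
      Filter.atTop (nhds 1) := by
  have hcardfun : ∀ m : ℕ, Fintype.card (Fin m → Fin m → Bool) = 2 ^ (m ^ 2) := by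
    intro m
    rw [Fintype.card_fun, Fintype.card_fun, Fintype.card_bool, Fintype.card_fin, ← pow_mul, sq]
  -- the squeeze
  have hlog : Tendsto (fun m : ℕ => Real.log m) atTop atTop :=
    Real.tendsto_log_atTop.comp tendsto_natCast_atTop_atTop
  have hαm : Tendsto (fun m : ℕ => α * m) atTop atTop :=
    (tendsto_natCast_atTop_atTop (R := ℝ)).const_mul_atTop h1
  have hev : ∀ᶠ m : ℕ in atTop, 4 ≤ m ∧ 8 / α + 1 ≤ Real.log m ∧ 2 ≤ α * m := by
    filter_upwards [eventually_ge_atTop 4, hlog.eventually_ge_atTop (8 / α + 1),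
      hαm.eventually_ge_atTop 2] with m hm hlogm hαm2
    exact ⟨hm, hlogm, hαm2⟩
  apply tendsto_of_tendsto_of_tendsto_of_le_of_le' (g := fun m : ℕ => 1 - (1/4 : ℝ) ^ m)
    (h := fun _ : ℕ => (1 : ℝ))
  · have : Tendsto (fun m : ℕ => (1/4 : ℝ) ^ m) atTop (nhds 0) :=
      tendsto_pow_atTop_nhds_zero_of_lt_one (by norm_num) (by norm_num)
    simpa using tendsto_const_nhds.sub this
  · exact tendsto_const_nhds
  · -- lower bound, eventually
    filter_upwards [hev] with m hm
    obtain ⟨hm4, hlogm, hαm2⟩ := hm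
    set K : ℕ := ⌊α * m⌋₊ with hK
    set D : ℕ := ⌊Real.log m⌋₊ with hD
    have hm1 : (1:ℝ) ≤ (m:ℝ) := by
      have : (4:ℝ) ≤ (m:ℝ) := by exact_mod_cast hm4
      linarith
    have hDr : (8 / α : ℝ) ≤ D := by
      have := Nat.sub_one_lt_floor (Real.log m)
      rw [← hD] at this
      linarith
    have hKr : (α * m / 2 : ℝ) ≤ K := by
      have := Nat.sub_one_lt_floor (α * m)
      rw [← hK] at this
      linarith
    have hD1 : 1 ≤ D := by
      have h8 : (8:ℝ) ≤ 8 / α := by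
        rw [le_div_iff₀ h1]; nlinarith
      have : (1:ℝ) ≤ (D:ℝ) := by linarith
      exact_mod_cast this
    have hDK : 4 * m ≤ D * K := by
      have h8 : (0:ℝ) ≤ 8 / α := by positivity
      have hmul := mul_le_mul hDr hKr (by linarith) (le_trans h8 hDr)
      have hcalc : (4 * m : ℝ) = 8 / α * (α * m / 2) := by
        field_simp
        ring
      have : (4 * m : ℝ) ≤ (D : ℝ) * K := by rw [hcalc]; linarith
      exact_mod_cast this
    have hKm : K ≤ m := by
      have : (K : ℝ) ≤ α * m := Nat.floor_le (by positivity)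
      have h' : (K : ℝ) ≤ (m : ℝ) := le_trans this (by nlinarith)
      exact_mod_cast h'
    -- bad event
    set badP : (Fin m → Fin m → Bool) → Prop := fun g =>
      ∃ S T : Finset (Fin m), (D ≤ S.card ∧ S.card ≤ K ∧ T.card = K + D - S.card) ∧
        ∀ a ∈ S, ∀ b ∈ T, g a b = false with hbadP
    have hbadcard : (univ.filter badP).card ≤ 2 ^ (m ^ 2 - 2 * m) := by
      set P : Finset (Finset (Fin m) × Finset (Fin m)) :=
        univ.filter (fun p => D ≤ p.1.card ∧ p.1.card ≤ K ∧ p.2.card = K + D - p.1.card) with hP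
      have hsub : univ.filter badP ⊆
          P.biUnion (fun p => univ.filter fun g => ∀ a ∈ p.1, ∀ b ∈ p.2, g a b = false) := by
        intro g hg
        rw [mem_filter] at hg
        obtain ⟨-, S, T, hcond, hemp⟩ := hg
        exact mem_biUnion.2 ⟨(S, T), mem_filter.2 ⟨mem_univ _, hcond⟩,
          mem_filter.2 ⟨mem_univ _, hemp⟩⟩
      have hterm : ∀ p ∈ P,
          (univ.filter fun g : Fin m → Fin m → Bool =>
            ∀ a ∈ p.1, ∀ b ∈ p.2, g a b = false).card ≤ 2 ^ (m ^ 2 - 4 * m) := by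
        intro p hp
        rw [hP, mem_filter] at hp
        obtain ⟨-, hs1, hs2, ht⟩ := hp
        have hst : 4 * m ≤ p.1.card * p.2.card := by
          refine le_trans hDK ?_
          have hsum : p.1.card + p.2.card = K + D := by omega
          zify
          nlinarith [hs1, hs2, hsum]
        rw [countST]
        exact Nat.pow_le_pow_right (by norm_num) (Nat.sub_le_sub_left hst _)
      have hPcard : P.card ≤ 2 ^ m * 2 ^ m := by
        calc P.card ≤ (univ : Finset (Finset (Fin m) × Finset (Fin m))).card :=
              Finset.card_le_univ P
          _ = 2 ^ m * 2 ^ m := by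
              rw [card_univ, Fintype.card_prod, Fintype.card_finset, Fintype.card_fin]
      calc (univ.filter badP).card ≤ _ := Finset.card_le_card hsub
        _ ≤ ∑ p ∈ P, (univ.filter fun g : Fin m → Fin m → Bool =>
              ∀ a ∈ p.1, ∀ b ∈ p.2, g a b = false).card := Finset.card_biUnion_le
        _ ≤ ∑ _p ∈ P, 2 ^ (m ^ 2 - 4 * m) := Finset.sum_le_sum hterm
        _ = P.card * 2 ^ (m ^ 2 - 4 * m) := by rw [Finset.sum_const, smul_eq_mul]
        _ ≤ (2 ^ m * 2 ^ m) * 2 ^ (m ^ 2 - 4 * m) := by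
            exact Nat.mul_le_mul_right _ hPcard
        _ = 2 ^ (m ^ 2 - 2 * m) := by
            rw [← pow_add, ← pow_add]
            congr 1
            have : 4 * m ≤ m ^ 2 := by nlinarith
            omega
    -- not bad implies good
    have hgoodsub : ∀ g : Fin m → Fin m → Bool, ¬ badP g →
        (∀ A B : Finset (Fin m), A.card = ⌊α * m⌋₊ → B.card = ⌊α * m⌋₊ →
          ∃ (A' : Finset (Fin m)) (f : Fin m → Fin m),
            A' ⊆ A ∧ α * m - Real.log m ≤ (A'.card : ℝ) ∧
            Set.InjOn f ↑A' ∧ ∀ a ∈ A', f a ∈ B ∧ g a (f a) = true) := by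
      intro g hg A B hA hB
      have Hg : ∀ S T : Finset (Fin m), (D - 1) + 1 ≤ S.card → S.card ≤ K →
          T.card = K + (D - 1) + 1 - S.card → ∃ a ∈ S, ∃ b ∈ T, g a b = true := by
        intro S T hs1 hs2 ht
        by_contra hcon
        push_neg at hcon
        apply hg
        refine ⟨S, T, ⟨by omega, hs2, by omega⟩, fun a ha b hb => ?_⟩
        have := hcon a ha b hb
        revert this
        cases g a b <;> simp
      obtain ⟨A', f, hsub, hcard, hinj, hprop⟩ := det g Hg A B (hA.trans hK.symm) (hB.trans hK.symm)
      refine ⟨A', f, hsub, ?_, hinj, hprop⟩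
      have hcast : (K : ℝ) + 1 ≤ (A'.card : ℝ) + D := by
        have : K + 1 ≤ A'.card + D := by omega
        exact_mod_cast this
      have hfl : α * m < (K : ℝ) + 1 := by
        rw [hK]
        exact_mod_cast Nat.lt_floor_add_one (α * m)
      have hDle : (D : ℝ) ≤ Real.log m := by
        rw [hD]
        exact Nat.floor_le (Real.log_nonneg hm1)
      linarith
    -- counting
    have hcu : (univ : Finset (Fin m → Fin m → Bool)).card = 2 ^ (m ^ 2) := by
      rw [card_univ, hcardfun]
    have hgoodcard : 2 ^ (m ^ 2) - 2 ^ (m ^ 2 - 2 * m) ≤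
        (Finset.univ.filter (fun g : Fin m → Fin m → Bool =>
          ∀ A B : Finset (Fin m), A.card = ⌊α * m⌋₊ → B.card = ⌊α * m⌋₊ →
            ∃ (A' : Finset (Fin m)) (f : Fin m → Fin m),
              A' ⊆ A ∧ α * m - Real.log m ≤ (A'.card : ℝ) ∧
              Set.InjOn f ↑A' ∧ ∀ a ∈ A', f a ∈ B ∧ g a (f a) = true)).card := by
      have hsdiff : univ \ univ.filter badP ⊆
          Finset.univ.filter (fun g : Fin m → Fin m → Bool =>
            ∀ A B : Finset (Fin m), A.card = ⌊α * m⌋₊ → B.card = ⌊α * m⌋₊ →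
              ∃ (A' : Finset (Fin m)) (f : Fin m → Fin m),
                A' ⊆ A ∧ α * m - Real.log m ≤ (A'.card : ℝ) ∧
                Set.InjOn f ↑A' ∧ ∀ a ∈ A', f a ∈ B ∧ g a (f a) = true) := by
        intro g hgm
        rw [Finset.mem_sdiff] at hgm
        refine mem_filter.2 ⟨mem_univ _, hgoodsub g (fun hb => hgm.2 ?_)⟩
        exact mem_filter.2 ⟨mem_univ _, hb⟩
      calc 2 ^ (m ^ 2) - 2 ^ (m ^ 2 - 2 * m)
          ≤ 2 ^ (m ^ 2) - (univ.filter badP).card := by omega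
        _ = (univ \ univ.filter badP).card := by
            rw [card_sdiff_of_subset (filter_subset _ _), hcu]
        _ ≤ _ := Finset.card_le_card hsdiff
    -- to reals
    have hpow : (2 : ℝ) ^ (m ^ 2) = 2 ^ (m ^ 2 - 2 * m) * 2 ^ (2 * m) := by
      rw [← pow_add]
      congr 1
      have h2m : 2 * m ≤ m ^ 2 := by nlinarith
      exact (Nat.sub_add_cancel h2m).symm
    have hppos : (0 : ℝ) < 2 ^ (m ^ 2) := by positivity
    rw [le_div_iff₀ hppos]
    have hcast : ((2 ^ (m ^ 2) - 2 ^ (m ^ 2 - 2 * m) : ℕ) : ℝ) =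
        (2 : ℝ) ^ (m ^ 2) - 2 ^ (m ^ 2 - 2 * m) := by
      have hle : 2 ^ (m ^ 2 - 2 * m) ≤ 2 ^ (m ^ 2) :=
        Nat.pow_le_pow_right (by norm_num) (Nat.sub_le _ _)
      rw [Nat.cast_sub hle]
      push_cast
      ring
    have hfin : (1 - (1/4 : ℝ) ^ m) * 2 ^ (m ^ 2) =
        (2 : ℝ) ^ (m ^ 2) - 2 ^ (m ^ 2 - 2 * m) := by
      rw [hpow]
      have h4 : ((1:ℝ)/4) ^ m = (2 ^ (2 * m))⁻¹ := by
        rw [div_pow, one_pow, pow_mul]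
        norm_num
      field_simp [h4]
      rw [h4, sub_mul, one_mul, inv_mul_cancel₀ (by positivity)]
    rw [hfin, ← hcast]
    exact Nat.cast_le.mpr hgoodcard
  · -- upper bound
    filter_upwards with m
    have hle : (Finset.univ.filter (fun g : Fin m → Fin m → Bool =>
          ∀ A B : Finset (Fin m), A.card = ⌊α * m⌋₊ → B.card = ⌊α * m⌋₊ →
            ∃ (A' : Finset (Fin m)) (f : Fin m → Fin m),
              A' ⊆ A ∧ α * m - Real.log m ≤ (A'.card : ℝ) ∧
              Set.InjOn f ↑A' ∧ ∀ a ∈ A', f a ∈ B ∧ g a (f a) = true)).card ≤ 2 ^ (m ^ 2) := by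
      calc _ ≤ (univ : Finset (Fin m → Fin m → Bool)).card := Finset.card_le_univ _
        _ = 2 ^ (m ^ 2) := by rw [card_univ, hcardfun]
    rw [div_le_one (by positivity)]
    exact_mod_cast hle
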